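/- Let N ≥ 1 and let λ_f, μ, m, β, ρ, ρ_f, ρ_w ∈ ℝ with χ = ρρ_w − ρ_f² ≠ 0, and set λ₀ = λ_f − mβ². Let A be the (2N+8) × (2N+8) real matrix with block structure A = [[0₄, A₁, 0_{4,2N}], [A₂, 0₄, 0_{4,2N}], [0_{2N,4}, A₃, 0_{2N,2N}]], where A₁ = [[−ρ_w/χ, 0, 0, −ρ_f/χ], [0, −ρ_w/χ, 0, 0], [ρ_f/χ, 0, 0, ρ/χ], [0, ρ_f/χ, 0, 0]], A₂ = [[−(λ_f+2μ), 0, −mβ, 0], [0, −μ, 0, 0], [−λ_f, 0, −mβ, 0], [mβ, 0, m, 0]], and A₃ is the 2N × 4 matrix whose odd-numbered rows all equal (ρ_f/χ, 0, 0, ρ/χ) and whose even-numbered rows all equal (0, ρ_f/χ, 0, 0). Then the characteristic polynomial of A equals X^{2N+2} · (X² − μρ_w/χ) · ( X⁴ − (((λ_f+2μ)ρ_w + m(ρ − 2ρ_f β))/χ) X² + m(λ₀ + 2μ)/χ ). In particular the eigenvalues of A do not depend on N beyond the multiplicity of 0, nor on any of the diffusive-approximation coefficients. -/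

import Mathlib

open Polynomial

/-- Entry `(i, j)` of the Biot-DA propagation matrix `A` along `x` (indices in `ℕ`):
block structure `[[0₄, A₁, 0], [A₂, 0₄, 0], [0, A₃, 0]]`. -/
noncomputable def biotAEntry (lamf μ m β ρ ρf ρw χ : ℝ) : ℕ → ℕ → ℝ
  | 0, 4 => -ρw / χ
  | 0, 7 => -ρf / χ
  | 1, 5 => -ρw / χ
  | 2, 4 => ρf / χ
  | 2, 7 => ρ / χ
  | 3, 5 => ρf / χ
  | 4, 0 => -(lamf + 2 * μ)
  | 4, 2 => -(m * β)
  | 5, 1 => -μ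
  | 6, 0 => -lamf
  | 6, 2 => -(m * β)
  | 7, 0 => m * β
  | 7, 2 => m
  | i, j =>
      if 8 ≤ i then
        if (i - 8) % 2 = 0 then
          (if j = 4 then ρf / χ else if j = 7 then ρ / χ else 0)
        else
          (if j = 5 then ρf / χ else 0)
      else 0

/-- The `(2N+8) × (2N+8)` Biot-DA propagation matrix along `x`. -/
noncomputable def biotA (N : ℕ) (lamf μ m β ρ ρf ρw χ : ℝ) :
    Matrix (Fin (2 * N + 8)) (Fin (2 * N + 8)) ℝ :=
  Matrix.of fun i j => biotAEntry lamf μ m β ρ ρf ρw χ i.val j.val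

open Polynomial Matrix

lemma charmatrix_zero' {n : Type*} [DecidableEq n] [Fintype n] :
    charmatrix (0 : Matrix n n ℝ) = Matrix.scalar n (X : ℝ[X]) := by
  ext i j
  by_cases h : i = j <;> simp [charmatrix_apply, h, Matrix.scalar_apply, Matrix.diagonal_apply]

lemma charpoly_antiblock {n : Type*} [DecidableEq n] [Fintype n]
    (P Q : Matrix n n ℝ) :
    (fromBlocks (0 : Matrix n n ℝ) P Q 0).charpoly =
      (Matrix.scalar n ((X : ℝ[X])^2) - (Q * P).map C).det := by
  classical
  set P' := P.map (C : ℝ →+* ℝ[X]) with hP'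
  set Q' := Q.map (C : ℝ →+* ℝ[X]) with hQ'
  set S := Matrix.scalar n (X : ℝ[X]) with hS
  have hM : charmatrix (fromBlocks (0 : Matrix n n ℝ) P Q 0) =
      fromBlocks S (-P') (-Q') S := by
    rw [charmatrix_fromBlocks, charmatrix_zero']
  have hcomm : S * P' = P' * S :=
    (Matrix.scalar_commute (X : ℝ[X]) (fun r => Commute.all _ _) P').eq
  have hSS : S * S = Matrix.scalar n ((X : ℝ[X])^2) := by
    rw [hS, ← _root_.map_mul, sq]
  have hdetS : S.det = (X : ℝ[X]) ^ Fintype.card n := by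
    rw [hS]
    simp [Matrix.scalar_apply, Matrix.det_diagonal]
  have hQP : Q' * P' = (Q * P).map (C : ℝ →+* ℝ[X]) := by
    rw [hP', hQ', ← Matrix.map_mul]
  have key : (fromBlocks S (-P') (-Q') S * fromBlocks S P' 0 S) =
      fromBlocks (Matrix.scalar n ((X:ℝ[X])^2)) 0 (-(Q' * S))
        (Matrix.scalar n ((X:ℝ[X])^2) - Q' * P') := by
    rw [Matrix.fromBlocks_multiply, Matrix.mul_zero, Matrix.mul_zero, add_zero, add_zero,
      Matrix.neg_mul, Matrix.neg_mul, Matrix.neg_mul, hcomm, add_neg_cancel, hSS, neg_add_eq_sub]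
  have hdet2 : (Matrix.scalar n ((X:ℝ[X])^2)).det = ((X:ℝ[X])^2) ^ Fintype.card n := by
    simp [Matrix.scalar_apply, Matrix.det_diagonal]
  have hXn : ((X : ℝ[X]) ^ Fintype.card n) * ((X:ℝ[X]) ^ Fintype.card n) ≠ 0 :=
    mul_ne_zero (pow_ne_zero _ X_ne_zero) (pow_ne_zero _ X_ne_zero)
  have hmul := congrArg Matrix.det key
  rw [Matrix.det_mul, Matrix.det_fromBlocks_zero₁₂, Matrix.det_fromBlocks_zero₂₁,
    hdetS, hdet2, hQP] at hmul
  rw [Matrix.charpoly, hM]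
  apply mul_right_cancel₀ hXn
  calc (fromBlocks S (-P') (-Q') S).det * (X ^ Fintype.card n * X ^ Fintype.card n)
      = (X ^ 2) ^ Fintype.card n * ((scalar n) ((X:ℝ[X]) ^ 2) - (Q * P).map C).det := by
        rw [← hmul]
    _ = ((scalar n) ((X:ℝ[X]) ^ 2) - (Q * P).map C).det *
        (X ^ Fintype.card n * X ^ Fintype.card n) := by
        rw [← pow_mul, ← pow_add]; ring

set_option maxHeartbeats 1000000 in
lemma charpoly_offdiag_blocks (a b c d p q r s t u : ℝ) :
    (fromBlocks (0 : Matrix (Fin 4) (Fin 4) ℝ)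
        !![a,0,0,b; 0,a,0,0; c,0,0,d; 0,c,0,0]
        !![p,0,q,0; 0,r,0,0; s,0,q,0; t,0,u,0] 0).charpoly =
      X^2 * (X^2 - C (a*r)) *
        (X^4 - C (c*q + d*u + a*p + b*t) * X^2 + C ((a*d - b*c)*(p*u - q*t))) := by
  have hQP : !![p,0,q,0; 0,r,0,0; s,0,q,0; t,0,u,0] * !![a,0,0,b; 0,a,0,0; c,0,0,d; 0,c,0,0]
      = !![p*a+q*c, 0, 0, p*b+q*d; 0, r*a, 0, 0; s*a+q*c, 0, 0, s*b+q*d; t*a+u*c, 0, 0, t*b+u*d] := by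
    ext i j
    fin_cases i <;> fin_cases j <;>
      simp [Matrix.mul_apply, Fin.sum_univ_succ, Matrix.vecHead, Matrix.vecTail]
  rw [charpoly_antiblock, hQP]
  have hlit : Matrix.scalar (Fin 4) ((X:ℝ[X])^2) -
      (!![p*a+q*c, 0, 0, p*b+q*d; 0, r*a, 0, 0; s*a+q*c, 0, 0, s*b+q*d; t*a+u*c, 0, 0, t*b+u*d]).map C =
      !![X^2 - C (p*a+q*c), 0, 0, -C (p*b+q*d);
         0, X^2 - C (r*a), 0, 0;
         -(C (s*a+q*c)), 0, X^2, -C (s*b+q*d);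
         -(C (t*a+u*c)), 0, 0, X^2 - C (t*b+u*d)] := by
    ext i j
    fin_cases i <;> fin_cases j <;>
      simp [Matrix.scalar_apply, Matrix.diagonal_apply, Matrix.vecHead, Matrix.vecTail]
  rw [hlit]
  have e1 : (Fin.castSucc (2:Fin 3)) = (2:Fin 4) := rfl
  have e2 : (Fin.castSucc (1:Fin 3)) = (1:Fin 4) := rfl
  have e3 : (Fin.castSucc (0:Fin 3)) = (0:Fin 4) := rfl
  have e4 : (Fin.castSucc (1:Fin 2)) = (1:Fin 3) := rfl
  have e5 : (Fin.castSucc (0:Fin 2)) = (0:Fin 3) := rfl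
  have e6 : (Fin.castSucc (0:Fin 1)) = (0:Fin 2) := rfl
  have s1 : Fin.succAbove (1:Fin 4) (0:Fin 3) = (0:Fin 4) := rfl
  have s2 : Fin.succAbove (1:Fin 4) (1:Fin 3) = (2:Fin 4) := rfl
  have s3 : Fin.succAbove (1:Fin 4) (2:Fin 3) = (3:Fin 4) := rfl
  have s4 : Fin.succAbove (2:Fin 4) (0:Fin 3) = (0:Fin 4) := rfl
  have s5 : Fin.succAbove (2:Fin 4) (1:Fin 3) = (1:Fin 4) := rfl
  have s6 : Fin.succAbove (2:Fin 4) (2:Fin 3) = (3:Fin 4) := rfl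
  have s7 : Fin.succAbove (3:Fin 4) (0:Fin 3) = (0:Fin 4) := rfl
  have s8 : Fin.succAbove (3:Fin 4) (1:Fin 3) = (1:Fin 4) := rfl
  have s9 : Fin.succAbove (3:Fin 4) (2:Fin 3) = (2:Fin 4) := rfl
  have s10 : Fin.succAbove (1:Fin 3) (0:Fin 2) = (0:Fin 3) := rfl
  have s11 : Fin.succAbove (1:Fin 3) (1:Fin 2) = (2:Fin 3) := rfl
  have s12 : Fin.succAbove (2:Fin 3) (0:Fin 2) = (0:Fin 3) := rfl
  have s13 : Fin.succAbove (2:Fin 3) (1:Fin 2) = (1:Fin 3) := rfl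
  have s14 : Fin.succAbove (1:Fin 2) (0:Fin 1) = (0:Fin 2) := rfl
  simp [Matrix.det_succ_row_zero, Fin.sum_univ_succ, Matrix.vecHead, Matrix.vecTail,
    e1, e2, e3, e4, e5, e6, s1, s2, s3, s4, s5, s6, s7, s8, s9, s10, s11, s12, s13, s14]
  ring

lemma biotAEntry_tail_tail (lamf μ m β ρ ρf ρw χ : ℝ) (k j : ℕ) :
    biotAEntry lamf μ m β ρ ρf ρw χ (k+8) (j+8) = 0 := by
  show (if (8:ℕ) ≤ k+8 then if (k+8-8)%2 = 0 then (if j+8 = 4 then ρf/χ else if j+8=7 then ρ/χ else 0) else (if j+8=5 then ρf/χ else 0) else 0) = 0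
  have h4 : j+8 ≠ 4 := by omega
  have h7 : j+8 ≠ 7 := by omega
  have h5 : j+8 ≠ 5 := by omega
  simp [h4, h7, h5]

lemma biotAEntry_top_right (lamf μ m β ρ ρf ρw χ : ℝ) (i j : ℕ) (hi : i < 8) :
    biotAEntry lamf μ m β ρ ρf ρw χ i (j+8) = 0 := by
  interval_cases i
  · show (if (8:ℕ) ≤ 0 then (if (0-8)%2 = 0 then (if j+8 = 4 then ρf/χ else if j+8 = 7 then ρ/χ else 0) else (if j+8 = 5 then ρf/χ else 0)) else 0) = 0
    norm_num
  · show (if (8:ℕ) ≤ 1 then (if (1-8)%2 = 0 then (if j+8 = 4 then ρf/χ else if j+8 = 7 then ρ/χ else 0) else (if j+8 = 5 then ρf/χ else 0)) else 0) = 0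
    norm_num
  · show (if (8:ℕ) ≤ 2 then (if (2-8)%2 = 0 then (if j+8 = 4 then ρf/χ else if j+8 = 7 then ρ/χ else 0) else (if j+8 = 5 then ρf/χ else 0)) else 0) = 0
    norm_num
  · show (if (8:ℕ) ≤ 3 then (if (3-8)%2 = 0 then (if j+8 = 4 then ρf/χ else if j+8 = 7 then ρ/χ else 0) else (if j+8 = 5 then ρf/χ else 0)) else 0) = 0
    norm_num
  · show (if (8:ℕ) ≤ 4 then (if (4-8)%2 = 0 then (if j+8 = 4 then ρf/χ else if j+8 = 7 then ρ/χ else 0) else (if j+8 = 5 then ρf/χ else 0)) else 0) = 0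
    norm_num
  · show (if (8:ℕ) ≤ 5 then (if (5-8)%2 = 0 then (if j+8 = 4 then ρf/χ else if j+8 = 7 then ρ/χ else 0) else (if j+8 = 5 then ρf/χ else 0)) else 0) = 0
    norm_num
  · show (if (8:ℕ) ≤ 6 then (if (6-8)%2 = 0 then (if j+8 = 4 then ρf/χ else if j+8 = 7 then ρ/χ else 0) else (if j+8 = 5 then ρf/χ else 0)) else 0) = 0
    norm_num
  · show (if (8:ℕ) ≤ 7 then (if (7-8)%2 = 0 then (if j+8 = 4 then ρf/χ else if j+8 = 7 then ρ/χ else 0) else (if j+8 = 5 then ρf/χ else 0)) else 0) = 0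
    norm_num
set_option maxRecDepth 100000 in
/-- Characteristic polynomial of the Biot-DA propagation matrix `A`:
`χ_A(X) = X^(2N+2) (X² − μρw/χ) (X⁴ − ((λf+2μ)ρw + m(ρ−2ρfβ))/χ · X² + m(λ₀+2μ)/χ)`;
in particular the eigenvalues do not depend on `N` (beyond the multiplicity of `0`)
nor on the diffusive-approximation coefficients. -/

theorem biotA_charpoly (N : ℕ) (hN : 1 ≤ N)
    (lamf μ m β ρ ρf ρw χ lam0 : ℝ)
    (hχ : χ = ρ * ρw - ρf ^ 2) (hχ0 : χ ≠ 0)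
    (hlam0 : lam0 = lamf - m * β ^ 2) :
    (biotA N lamf μ m β ρ ρf ρw χ).charpoly =
      X ^ (2 * N + 2) * (X ^ 2 - C (μ * ρw / χ)) *
        (X ^ 4 - C (((lamf + 2 * μ) * ρw + m * (ρ - 2 * ρf * β)) / χ) * X ^ 2
          + C (m * (lam0 + 2 * μ) / χ)) := by
  classical
  -- the three-block equivalence
  let g : (Fin 4 ⊕ Fin 4) ⊕ Fin (2*N) ≃ Fin (2*N+8) :=
    ((finSumFinEquiv.sumCongr (Equiv.refl (Fin (2*N)))).trans finSumFinEquiv).trans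
      (finCongr (by omega))
  have hgll : ∀ i : Fin 4, (g (Sum.inl (Sum.inl i))).val = i.val := by
    intro i
    rfl
  have hglr : ∀ i : Fin 4, (g (Sum.inl (Sum.inr i))).val = 4 + i.val := by
    intro i
    rfl
  have hgr : ∀ i : Fin (2*N), (g (Sum.inr i)).val = 8 + i.val := by
    intro i
    rfl
  let A1 : Matrix (Fin 4) (Fin 4) ℝ :=
    !![-ρw/χ, 0, 0, -ρf/χ; 0, -ρw/χ, 0, 0; ρf/χ, 0, 0, ρ/χ; 0, ρf/χ, 0, 0]
  let A2 : Matrix (Fin 4) (Fin 4) ℝ :=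
    !![-(lamf + 2*μ), 0, -(m*β), 0; 0, -μ, 0, 0; -lamf, 0, -(m*β), 0; m*β, 0, m, 0]
  let Cm : Matrix (Fin (2*N)) (Fin 4 ⊕ Fin 4) ℝ :=
    Matrix.of fun i j =>
      biotAEntry lamf μ m β ρ ρf ρw χ ((g (Sum.inr i)).val) ((g (Sum.inl j)).val)
  have hre : (biotA N lamf μ m β ρ ρf ρw χ).submatrix g g =
      fromBlocks (fromBlocks 0 A1 A2 0) 0 Cm 0 := by
    ext x y
    match x, y with
    | Sum.inl x, Sum.inl y =>
      show biotAEntry lamf μ m β ρ ρf ρw χ ((g (Sum.inl x)).val) ((g (Sum.inl y)).val) = _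
      match x, y with
      | Sum.inl i, Sum.inl j =>
        rw [hgll, hgll]
        fin_cases i <;> fin_cases j <;> rfl
      | Sum.inl i, Sum.inr j =>
        rw [hgll, hglr]
        fin_cases i <;> fin_cases j <;> rfl
      | Sum.inr i, Sum.inl j =>
        rw [hglr, hgll]
        fin_cases i <;> fin_cases j <;> rfl
      | Sum.inr i, Sum.inr j =>
        rw [hglr, hglr]
        fin_cases i <;> fin_cases j <;> rfl
    | Sum.inl x, Sum.inr j =>
      show biotAEntry lamf μ m β ρ ρf ρw χ ((g (Sum.inl x)).val) ((g (Sum.inr j)).val) = 0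
      obtain ⟨k, hk⟩ : ∃ k, (g (Sum.inr j)).val = k + 8 := ⟨j.val, by rw [hgr]; omega⟩
      rw [hk]
      have hx : (g (Sum.inl x)).val < 8 := by
        match x with
        | Sum.inl i => rw [hgll]; omega
        | Sum.inr i => rw [hglr]; omega
      exact biotAEntry_top_right lamf μ m β ρ ρf ρw χ _ _ hx
    | Sum.inr i, Sum.inl y =>
      rfl
    | Sum.inr i, Sum.inr j =>
      show biotAEntry lamf μ m β ρ ρf ρw χ ((g (Sum.inr i)).val) ((g (Sum.inr j)).val) = 0
      obtain ⟨k, hk⟩ : ∃ k, (g (Sum.inr i)).val = k + 8 := ⟨i.val, by rw [hgr]; omega⟩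
      obtain ⟨l, hl⟩ : ∃ l, (g (Sum.inr j)).val = l + 8 := ⟨j.val, by rw [hgr]; omega⟩
      rw [hk, hl]
      exact biotAEntry_tail_tail lamf μ m β ρ ρf ρw χ _ _
  have hcp : (biotA N lamf μ m β ρ ρf ρw χ).charpoly =
      (fromBlocks (fromBlocks 0 A1 A2 0) 0 Cm 0).charpoly := by
    rw [← Matrix.charpoly_reindex g.symm (biotA N lamf μ m β ρ ρf ρw χ)]
    rw [Matrix.reindex_apply, Equiv.symm_symm, hre]
  rw [hcp, Matrix.charpoly_fromBlocks_zero₁₂, charpoly_offdiag_blocks]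
  have hzero : (0 : Matrix (Fin (2*N)) (Fin (2*N)) ℝ).charpoly = X ^ (2*N) := by
    rw [Matrix.charpoly, charmatrix_zero']
    simp [Matrix.scalar_apply, Matrix.det_diagonal]
  rw [hzero]
  have hC1 : C ((-ρw/χ) * (-μ)) = C (μ * ρw / χ) := congrArg C (by ring)
  have hC2 : C ((ρf/χ) * (-(m*β)) + (ρ/χ) * m + (-ρw/χ) * (-(lamf + 2*μ)) + (-ρf/χ) * (m*β))
      = C (((lamf + 2 * μ) * ρw + m * (ρ - 2 * ρf * β)) / χ) := congrArg C (by ring)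
  have hC3 : C (((-ρw/χ) * (ρ/χ) - (-ρf/χ) * (ρf/χ)) * ((-(lamf + 2*μ)) * m - (-(m*β)) * (m*β)))
      = C (m * (lam0 + 2 * μ) / χ) := by
    refine congrArg C ?_
    subst hlam0
    field_simp
    rw [hχ]
    ring
  rw [hC1, hC2, hC3]
  ring
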